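/- For every s, w ∈ V with w ≠ s and d(s,w) < ∞, the number of shortest paths satisfies the predecessor recursion σ_{sw} = Σ_{v ∈ P_s(w)} σ_{sv}. -/

import Mathlib

open scoped BigOperators

/-- A directed graph on vertex set `V` with positive real edge weights. -/
structure WDigraph (V : Type*) where
  /-- the edge relation -/
  E : V → V → Prop
  /-- the edge weights -/
  w : V → V → ℝ
  /-- weights of edges are positive -/
  pos : ∀ a b, E a b → 0 < w a b

namespace WDigraph

variable {V : Type*} [Fintype V] [DecidableEq V]

/-- `p` is a simple path from `s` to `t` in `G`: a nonempty list of pairwise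
distinct vertices starting at `s`, ending at `t`, consecutive vertices joined
by edges. (Since all weights are positive, every shortest path is simple, so
it suffices to consider simple paths throughout.) -/
def IsPath (G : WDigraph V) (s t : V) (p : List V) : Prop :=
  List.Chain' G.E p ∧ p.head? = some s ∧ p.getLast? = some t ∧ p.Nodup

/-- The total weight of a list of vertices (sum of the weights of consecutive pairs). -/
def pw (G : WDigraph V) : List V → ℝ
  | [] => 0
  | [_] => 0
  | a :: b :: r => G.w a b + G.pw (b :: r)

/-- `d(s,t)`: shortest-path distance from `s` to `t`, equal to `⊤` (infinity)
if `t` is unreachable from `s`. -/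
noncomputable def dist (G : WDigraph V) (s t : V) : EReal :=
  sInf ((fun p => (G.pw p : EReal)) '' {p | G.IsPath s t p})

/-- The set of shortest `s`-`t` paths in `G`. -/
def SP (G : WDigraph V) (s t : V) : Set (List V) :=
  {p | G.IsPath s t p ∧ (G.pw p : EReal) = G.dist s t}

/-- `σ_{st}`: the number of shortest `s`-`t` paths in `G`. -/
noncomputable def sigma (G : WDigraph V) (s t : V) : ℕ :=
  (G.SP s t).ncard

/-- `σ_{st}(v)`: the number of shortest `s`-`t` paths in `G` that contain `v`. -/
noncomputable def sigmaV (G : WDigraph V) (s t v : V) : ℕ :=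
  {p ∈ G.SP s t | v ∈ p}.ncard

/-- `σ_{st}(v,w)`: the number of shortest `s`-`t` paths in `G` using the edge `(v,w)`. -/
noncomputable def sigmaE (G : WDigraph V) (s t v w : V) : ℕ :=
  {p ∈ G.SP s t | [v, w] <:+: p}.ncard

/-- `P_s(t)`: the set of predecessors of `t` with respect to source `s`:
nodes `y` with `(y,t) ∈ E` and `d(s,y) + ω(y,t) = d(s,t) < ∞`. -/
def pred (G : WDigraph V) (s t : V) : Set V :=
  {y | G.E y t ∧ G.dist s y + (G.w y t : EReal) = G.dist s t ∧ G.dist s t < ⊤}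

/-- `δ_{s•}(v)`: Brandes's one-sided dependency of `s` on `v`
(a summand is `0` whenever its denominator is `0`, which is automatic since
in Lean division by zero yields zero). -/
noncomputable def delta (G : WDigraph V) (s v : V) : ℝ :=
  ∑ᶠ t ∈ {t : V | t ≠ s ∧ t ≠ v}, (G.sigmaV s t v : ℝ) / (G.sigma s t : ℝ)

/-- `c_B(v)`: the betweenness centrality of `v`. -/
noncomputable def bc (G : WDigraph V) (v : V) : ℝ :=
  ∑ᶠ s ∈ {s : V | s ≠ v}, G.delta s v

/-- `G'` is obtained from `G` by the incremental update `(u, v, ω'(u,v))`: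
either a new edge `(u,v) ∉ E` is inserted with positive weight, or the weight
of the existing edge `(u,v)` is decreased; all other edges and weights are
unchanged. (Positivity of all weights is part of the `WDigraph` structure.) -/
structure IsUpdate (G G' : WDigraph V) (u v : V) : Prop where
  /-- the updated edge is present in `G'` -/
  edge' : G'.E u v
  /-- `E' = E ∪ {(u,v)}` -/
  edge_iff : ∀ a b, G'.E a b ↔ G.E a b ∨ a = u ∧ b = v
  /-- `ω'` agrees with `ω` on all edges other than `(u,v)` -/
  weight_eq : ∀ a b, ¬(a = u ∧ b = v) → G'.w a b = G.w a b
  /-- either an insertion of a new edge, or a weight decrease of an existing one -/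
  insert_or_decrease : ¬ G.E u v ∨ (G.E u v ∧ G'.w u v < G.w u v)

/-- `S(t)`: the affected sources of `t`. -/
def affS (G G' : WDigraph V) (t : V) : Set V :=
  {s | G.dist s t > G'.dist s t ∨ G.sigma s t ≠ G'.sigma s t}

/-- `T(s)`: the affected targets of `s`. -/
def affT (G G' : WDigraph V) (s : V) : Set V :=
  {t | G.dist s t > G'.dist s t ∨ G.sigma s t ≠ G'.sigma s t}

/-- `Δ_{s•}(v) = Σ_{t ∈ T(s), t ≠ v} σ_{st}(v)/σ_{st}`, computed in `G`
(`0`-convention for zero denominators). -/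
noncomputable def Delta (G G' : WDigraph V) (s v : V) : ℝ :=
  ∑ᶠ t ∈ {t : V | t ∈ affT G G' s ∧ t ≠ v}, (G.sigmaV s t v : ℝ) / (G.sigma s t : ℝ)

/-- `Δ'_{s•}(v) = Σ_{t ∈ T(s), t ≠ v} σ'_{st}(v)/σ'_{st}`, computed in `G'`
(`0`-convention for zero denominators). -/
noncomputable def Delta' (G G' : WDigraph V) (s v : V) : ℝ :=
  ∑ᶠ t ∈ {t : V | t ∈ affT G G' s ∧ t ≠ v}, (G'.sigmaV s t v : ℝ) / (G'.sigma s t : ℝ)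

section Aux

variable (G : WDigraph V)

lemma pw_nonneg : ∀ {l : List V}, l.Chain' G.E → 0 ≤ G.pw l
  | [], _ => le_refl _
  | [_], _ => le_refl _
  | a :: b :: r, h => by
    unfold List.Chain' at h; rw [List.isChain_cons_cons] at h
    have h1 := G.pos a b h.1
    have h2 := pw_nonneg h.2
    simp only [pw]; linarith

lemma pw_concat : ∀ (l : List V) (hl : l ≠ []) (z : V),
    G.pw (l ++ [z]) = G.pw l + G.w (l.getLast hl) z
  | [], hl, _ => absurd rfl hl
  | [a], _, z => by simp [pw]
  | a :: b :: r, _, z => by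
    have := pw_concat (b :: r) (List.cons_ne_nil _ _) z
    simp only [List.cons_append, pw, List.append_eq] at this ⊢
    rw [this, List.getLast_cons (List.cons_ne_nil _ _)]
    ring

lemma pw_take_le : ∀ (l : List V), l.Chain' G.E → ∀ n, G.pw (l.take n) ≤ G.pw l
  | [], _, n => by simp [pw]
  | [a], _, n => by cases n <;> simp [pw]
  | a :: b :: r, h, 0 => by simpa [pw] using G.pw_nonneg h
  | a :: b :: r, h, 1 => by
    unfold List.Chain' at h; rw [List.isChain_cons_cons] at h
    have h1 := G.pos a b h.1
    have h2 := G.pw_nonneg h.2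
    simp only [List.take, pw]; linarith
  | a :: b :: r, h, (n+2) => by
    unfold List.Chain' at h; rw [List.isChain_cons_cons] at h
    have ih := pw_take_le (b :: r) h.2 (n+1)
    simp only [List.take, pw] at ih ⊢
    linarith

lemma isPath_finite (s t : V) : {p | G.IsPath s t p}.Finite := by
  apply (List.finite_length_le V (Fintype.card V)).subset
  intro p hp
  exact hp.2.2.2.length_le_card

lemma dist_le_pw {s t : V} {p : List V} (hp : G.IsPath s t p) :
    G.dist s t ≤ (G.pw p : EReal) :=
  sInf_le ⟨p, hp, rfl⟩

lemma exists_sp {s t : V} (hfin : G.dist s t < ⊤) : ∃ p, p ∈ G.SP s t := by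
  have hne : {p | G.IsPath s t p}.Nonempty := by
    by_contra h
    rw [Set.not_nonempty_iff_eq_empty] at h
    have : G.dist s t = ⊤ := by
      rw [dist, h, Set.image_empty, sInf_empty]
    simp [this] at hfin
  have hfin' : ((fun p => (G.pw p : EReal)) '' {p | G.IsPath s t p}).Finite :=
    (G.isPath_finite s t).image _
  have := (hne.image (fun p => (G.pw p : EReal))).csInf_mem hfin'
  obtain ⟨p, hp, hpw⟩ := this
  exact ⟨p, hp, hpw⟩

/-- cut lemma: a path containing `w` yields an `s`-`w` path of no larger weight -/
lemma dist_le_of_mem {s t w : V} {q : List V} (hq : G.IsPath s t q) (hw : w ∈ q) :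
    G.dist s w ≤ (G.pw q : EReal) := by
  classical
  obtain ⟨hc, hh, hl, hn⟩ := hq
  set k := q.idxOf w with hk
  have hklt : k < q.length := List.idxOf_lt_length_iff.2 hw
  set p := q.take (k+1) with hp
  have hplen : p.length = k + 1 := by
    rw [hp, List.length_take]; omega
  have hpath : G.IsPath s w p := by
    refine ⟨hc.take _, ?_, ?_, hn.sublist (List.take_sublist _ _)⟩
    · rw [hp]
      cases q with
      | nil => simp at hw
      | cons a q' => simp [List.take] at hh ⊢; exact hh
    · rw [List.getLast?_eq_getElem?, hplen]
      simp only [Nat.add_sub_cancel]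
      rw [hp, List.getElem?_take, if_pos (by omega)]
      rw [List.getElem?_eq_getElem hklt]
      simp [hk, List.getElem_idxOf]
  calc G.dist s w ≤ (G.pw p : EReal) := G.dist_le_pw hpath
    _ ≤ (G.pw q : EReal) := by exact_mod_cast G.pw_take_le q hc (k+1)

end Aux

section Aux2

variable (G : WDigraph V)

lemma isPath_concat {s y w : V} {q : List V} (hq : G.IsPath s y q) (hE : G.E y w)
    (hw : w ∉ q) : G.IsPath s w (q ++ [w]) ∧ G.pw (q ++ [w]) = G.pw q + G.w y w := by
  obtain ⟨hc, hh, hl, hn⟩ := hq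
  have hqne : q ≠ [] := by rintro rfl; simp at hh
  have hlast : q.getLast hqne = y := by
    have := List.getLast?_eq_getLast hqne
    rw [hl] at this; exact (Option.some.inj this).symm
  refine ⟨⟨?_, ?_, ?_, ?_⟩, ?_⟩
  · unfold List.Chain'; rw [List.isChain_append]
    refine ⟨hc, List.isChain_singleton _, ?_⟩
    intro x hx z hz
    rw [hl] at hx
    simp at hx hz
    rw [← hx, ← hz]; exact hE
  · rw [List.head?_append_of_ne_nil _ hqne]; exact hh
  · simp
  · rw [List.nodup_append]
    exact ⟨hn, List.nodup_singleton _, fun a ha b hb h => hw (by rw [List.mem_singleton.1 hb] at h; rwa [h] at ha)⟩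
  · rw [G.pw_concat q hqne, hlast]

lemma append_mem_SP {s w y : V} (hy : y ∈ G.pred s w) {q : List V} (hq : q ∈ G.SP s y) :
    q ++ [w] ∈ G.SP s w := by
  obtain ⟨hE, hsum, hlt⟩ := hy
  obtain ⟨hpath, hpw⟩ := hq
  have hwq : w ∉ q := by
    intro hw
    have h1 : G.dist s w ≤ (G.pw q : EReal) := G.dist_le_of_mem hpath hw
    have h2 : G.dist s y < G.dist s w := by
      rw [← hsum, ← hpw, ← EReal.coe_add]
      exact_mod_cast lt_add_of_pos_right _ (G.pos y w hE)
    rw [hpw] at h1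
    exact absurd (h1.trans_lt h2) (lt_irrefl _)
  obtain ⟨hpath', hpw'⟩ := G.isPath_concat hpath hE hwq
  refine ⟨hpath', ?_⟩
  rw [hpw', EReal.coe_add, hpw, hsum]

lemma SP_decomp {s w : V} (hws : w ≠ s) {p : List V}
    (hp : p ∈ G.SP s w) : ∃ y ∈ G.pred s w, ∃ q ∈ G.SP s y, p = q ++ [w] := by
  obtain ⟨⟨hc, hh, hl, hn⟩, hpw⟩ := hp
  have hfin : G.dist s w < ⊤ := by
    rw [← hpw]; exact EReal.coe_lt_top _
  have hpne : p ≠ [] := by rintro rfl; simp at hh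
  have hdecomp : p.dropLast ++ [w] = p := List.dropLast_append_getLast? w hl
  set q := p.dropLast with hqdef
  have hqne : q ≠ [] := by
    intro h
    rw [h, List.nil_append] at hdecomp
    rw [← hdecomp] at hh
    simp at hh
    exact hws hh
  set y := q.getLast hqne with hydef
  have hql : q.getLast? = some y := List.getLast?_eq_getLast hqne
  have hchain := hc
  unfold List.Chain' at hchain; rw [← hdecomp, List.isChain_append] at hchain
  obtain ⟨hcq, -, hrel⟩ := hchain
  have hE : G.E y w := hrel y hql w rfl
  have hqpath : G.IsPath s y q := by
    refine ⟨hcq, ?_, hql, hn.sublist (by rw [← hdecomp]; exact (List.prefix_append _ _).sublist)⟩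
    rw [← hdecomp, List.head?_append_of_ne_nil _ hqne] at hh
    exact hh
  have hpwp : G.pw p = G.pw q + G.w y w := by
    rw [← hdecomp, G.pw_concat q hqne, hydef]
  have hle : G.dist s y ≤ (G.pw q : EReal) := G.dist_le_pw hqpath
  have heq : (G.pw q : EReal) = G.dist s y := by
    by_contra hne
    have hlt : G.dist s y < (G.pw q : EReal) := lt_of_le_of_ne hle (Ne.symm hne)
    obtain ⟨q', hq'path, hq'pw⟩ := G.exists_sp (hlt.trans (EReal.coe_lt_top _))
    have hq'lt : G.pw q' < G.pw q := by
      rw [← hq'pw] at hlt; exact_mod_cast hlt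
    by_cases hwq' : w ∈ q'
    · have h1 : G.dist s w ≤ (G.pw q' : EReal) := G.dist_le_of_mem hq'path hwq'
      have h2 : (G.pw q' : EReal) < G.dist s w := by
        rw [← hpw, hpwp]
        exact_mod_cast hq'lt.trans (lt_add_of_pos_right _ (G.pos y w hE))
      exact absurd (h1.trans_lt h2) (lt_irrefl _)
    · have hyq' : q'.getLast? = some y := hq'path.2.2.1
      obtain ⟨hpath', hpw'⟩ := G.isPath_concat hq'path hE hwq'
      have h1 : G.dist s w ≤ (G.pw (q' ++ [w]) : EReal) := G.dist_le_pw hpath'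
      have h2 : (G.pw (q' ++ [w]) : EReal) < G.dist s w := by
        rw [hpw', ← hpw, hpwp]
        exact_mod_cast add_lt_add_left hq'lt _
      exact absurd (h1.trans_lt h2) (lt_irrefl _)
  refine ⟨y, ⟨hE, ?_, hfin⟩, q, ⟨hqpath, heq⟩, hdecomp.symm⟩
  rw [← heq, ← EReal.coe_add, ← hpwp, hpw]

lemma ncard_biUnion_finset {α β : Type*} [DecidableEq α] (T : Finset α) (f : α → Set β)
    (hf : ∀ y ∈ T, (f y).Finite)
    (hdisj : ∀ y ∈ T, ∀ z ∈ T, y ≠ z → Disjoint (f y) (f z)) :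
    (⋃ y ∈ T, f y).ncard = ∑ y ∈ T, (f y).ncard := by
  induction T using Finset.induction_on with
  | empty => simp
  | @insert a T ha ih =>
    rw [Finset.set_biUnion_insert, Finset.sum_insert ha]
    rw [Set.ncard_union_eq ?_ (hf a (Finset.mem_insert_self a T)) ?_,
      ih (fun y hy => hf y (Finset.mem_insert_of_mem hy))
        (fun y hy z hz => hdisj y (Finset.mem_insert_of_mem hy) z (Finset.mem_insert_of_mem hz))]
    · simp only [Set.disjoint_iUnion_right]
      intro y hy
      exact hdisj a (Finset.mem_insert_self a T) y (Finset.mem_insert_of_mem hy)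
        (fun h => ha (h ▸ hy))
    · exact Set.Finite.biUnion T.finite_toSet
        (fun y hy => hf y (Finset.mem_insert_of_mem hy))

end Aux2

/-- For every `s, w ∈ V` with `w ≠ s` and `d(s,w) < ∞`, the number
of shortest paths satisfies the predecessor recursion `σ_{sw} = Σ_{y ∈ P_s(w)} σ_{sy}`. -/
theorem sigma_eq_sum_pred (G : WDigraph V) (s w : V)
    (hws : w ≠ s) (hfin : G.dist s w < ⊤) :
    G.sigma s w = ∑ᶠ y ∈ G.pred s w, G.sigma s y := by
  classical
  have hpredfin : (G.pred s w).Finite := Set.toFinite _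
  set T := hpredfin.toFinset with hTdef
  have hTc : (T : Set V) = G.pred s w := hpredfin.coe_toFinset
  set e : V → Set (List V) := fun y => (· ++ [w]) '' (G.SP s y) with he
  have hcover : G.SP s w = ⋃ y ∈ T, e y := by
    ext p
    simp only [Set.mem_iUnion, exists_prop, he, Set.mem_image]
    constructor
    · intro hp
      obtain ⟨y, hy, q, hq, rfl⟩ := G.SP_decomp hws hp
      exact ⟨y, hpredfin.mem_toFinset.2 hy, q, hq, rfl⟩
    · rintro ⟨y, hy, q, hq, rfl⟩
      exact G.append_mem_SP (hpredfin.mem_toFinset.1 hy) hq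
  have hef : ∀ y ∈ T, (e y).Finite := fun y _ =>
    ((G.isPath_finite s y).subset (fun p hp => hp.1)).image _
  have hdisj : ∀ y ∈ T, ∀ z ∈ T, y ≠ z → Disjoint (e y) (e z) := by
    intro y _ z _ hyz
    rw [Set.disjoint_left]
    rintro p ⟨q, hq, rfl⟩ ⟨q', hq', heq⟩
    cases List.append_left_injective [w] heq
    exact hyz (Option.some.inj ((hq.1.2.2.1).symm.trans hq'.1.2.2.1))
  have hcount : ∀ y, (e y).ncard = G.sigma s y := fun y =>
    Set.ncard_image_of_injOn ((List.append_left_injective [w]).injOn)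
  rw [show G.pred s w = (T : Set V) from hTc.symm, finsum_mem_coe_finset]
  rw [sigma, hcover, ncard_biUnion_finset T e hef hdisj]
  exact Finset.sum_congr rfl (fun y _ => hcount y)


end WDigraph
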